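/- Let m_a > 0, m_d ≥ 0, α ∈ (0,1), and w, d ≥ 0 with w+d ≤ 1. Define M(1) := [[m_a, m_d], [w, 1−w−d]] and M(2) := [[α·m_a, α·m_d], [w, 1−w−d]], and set c := det M(1)/m_a and c⁺ := max{c, 0}. Then, ℙ-almost surely, liminf_{n→∞} (1/n) · log‖M(I_1)·M(I_2)·…·M(I_n)‖ ≥ (s₂/(s₁+s₂))·log( tr M(1) − c⁺ ) + (s₁/(s₁+s₂))·log( tr M(2) − c⁺ ). -/

import Mathlib

open MeasureTheory Filter Topology

/-- The entrywise sum-of-absolute-values "norm" of a real matrix. -/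
noncomputable def matNorm {m n : Type*} [Fintype m] [Fintype n] (M : Matrix m n ℝ) : ℝ :=
  ∑ i, ∑ j, |M i j|

/-- The stationary distribution π = (s₂/(s₁+s₂), s₁/(s₁+s₂)) of the binary environment
(environment state "1" is index 0, state "2" is index 1). -/
noncomputable def envPi (s : Fin 2 → ℝ) : Fin 2 → ℝ :=
  ![s 1 / (s 0 + s 1), s 0 / (s 0 + s 1)]

/-- The transition matrix P of the binary environment. -/
noncomputable def envP (s : Fin 2 → ℝ) : Matrix (Fin 2) (Fin 2) ℝ :=
  !![1 - s 0, s 0; s 1, 1 - s 1]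


/-- Lower bound for the Lyapunov exponent of the stochastic switcher with
environment-independent waking and death probabilities (Theorem 1.4 / `thm:dirac-lower-bound`). -/

lemma integrable_of_bound {Ω : Type*} [MeasurableSpace Ω] (μ : Measure Ω) [IsFiniteMeasure μ]
    {u : Ω → ℝ} (hm : Measurable u) (C : ℝ) (h : ∀ ω, |u ω| ≤ C) : Integrable u μ :=
  (integrable_const C).mono' hm.aestronglyMeasurable (Filter.Eventually.of_forall h)

lemma bddBelow_of_abs {u : ℕ → ℝ} (C : ℝ) (hu : ∀ n, |u n| ≤ C) :
    Filter.IsBoundedUnder (· ≥ ·) atTop u :=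
  Filter.isBoundedUnder_of ⟨-C, fun n => (abs_le.mp (hu n)).1⟩

lemma cobdd_of_abs {u : ℕ → ℝ} (C : ℝ) (hu : ∀ n, |u n| ≤ C) :
    Filter.IsCoboundedUnder (· ≥ ·) atTop u :=
  Filter.IsBoundedUnder.isCoboundedUnder_ge
    (Filter.isBoundedUnder_of ⟨C, fun n => (abs_le.mp (hu n)).2⟩)

lemma lim_le_lim_of_sub {u v : ℕ → ℝ} (C : ℝ) (hu : ∀ n, |u n| ≤ C) (hv : ∀ n, |v n| ≤ C)
    (h : Filter.Tendsto (fun n => u n - v n) atTop (𝓝 0)) :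
    Filter.liminf u atTop ≤ Filter.liminf v atTop := by
  refine le_of_forall_pos_le_add (fun ε hε => ?_)
  have hev : ∀ᶠ n in atTop, u n ≤ v n + ε := by
    filter_upwards [Metric.tendsto_nhds.mp h ε hε] with n hn
    rw [Real.dist_eq, sub_zero] at hn
    linarith [(abs_lt.mp hn).2]
  have h1 : Filter.liminf u atTop ≤ Filter.liminf (fun n => v n + ε) atTop := by
    refine Filter.liminf_le_liminf hev (bddBelow_of_abs C hu) ?_
    exact cobdd_of_abs (C + ε) (fun n => by
      have := abs_le.mp (hv n); rw [abs_le]; constructor <;> linarith)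
  have h2 : Filter.liminf v atTop + ε = Filter.liminf (fun n => v n + ε) atTop := by
    have hmono : Monotone (fun x : ℝ => x + ε) := fun a b hab => by simpa using hab
    exact hmono.map_liminf_of_continuousAt (F := atTop) v (continuous_add_right ε).continuousAt
      (cobdd_of_abs C hv) (bddBelow_of_abs C hv)
  linarith [h1, h2]

lemma liminf_eq_of_sub {u v : ℕ → ℝ} (C : ℝ) (hu : ∀ n, |u n| ≤ C) (hv : ∀ n, |v n| ≤ C)
    (h : Filter.Tendsto (fun n => u n - v n) atTop (𝓝 0)) :
    Filter.liminf u atTop = Filter.liminf v atTop :=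
  le_antisymm (lim_le_lim_of_sub C hu hv h)
    (lim_le_lim_of_sub C hv hu (by simpa using h.neg))

lemma maximal_ergodic {Ω : Type*} [MeasurableSpace Ω] (μ : Measure Ω) [IsProbabilityMeasure μ]
    {T : Ω → Ω} (hT : MeasurePreserving T μ μ) {h : Ω → ℝ} (hm : Measurable h) (C : ℝ)
    (hb : ∀ ω, |h ω| ≤ C) :
    0 ≤ ∫ ω in {ω | ∃ n, 0 < birkhoffSum T h n ω}, h ω ∂μ := by
  set C' : ℝ := max C 0 with hC'
  have hC0 : 0 ≤ C' := le_max_right _ _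
  have hb' : ∀ ω, |h ω| ≤ C' := fun ω => (hb ω).trans (le_max_left _ _)
  set S : ℕ → Ω → ℝ := fun n => birkhoffSum T h n with hS
  have hSm : ∀ n, Measurable (S n) := fun n =>
    Finset.measurable_sum _ (fun k _ => hm.comp (hT.measurable.iterate k))
  have hSb : ∀ n ω, |S n ω| ≤ n * C' := by
    intro n ω
    calc |S n ω| ≤ ∑ k ∈ Finset.range n, |h (T^[k] ω)| := Finset.abs_sum_le_sum_abs _ _
    _ ≤ ∑ _k ∈ Finset.range n, C' := Finset.sum_le_sum (fun k _ => hb' _)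
    _ = n * C' := by simp [mul_comm]
  have hne : ∀ N : ℕ, (0 : ℕ) ∈ Finset.range (N + 1) := fun N => Finset.mem_range.mpr (Nat.succ_pos N)
  set MX : ℕ → Ω → ℝ := fun N ω => (Finset.range (N+1)).sup' ⟨0, hne N⟩ (fun n => S n ω) with hMX
  have hMXm : ∀ N, Measurable (MX N) := by
    intro N
    have hmm := Finset.measurable_sup' (s := Finset.range (N+1)) ⟨0, hne N⟩ (f := S)
      (fun n _ => hSm n)
    have : MX N = (Finset.range (N+1)).sup' ⟨0, hne N⟩ S := by
      funext ω; exact (Finset.sup'_apply _ _ _).symm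
    rw [this]; exact hmm
  have hMX0 : ∀ N ω, 0 ≤ MX N ω := by
    intro N ω
    have h0 : S 0 ω ≤ MX N ω := Finset.le_sup' (fun n => S n ω) (hne N)
    have : S 0 ω = 0 := by simp [hS, birkhoffSum]
    linarith
  have hMXb : ∀ N ω, |MX N ω| ≤ (N+1) * C' := by
    intro N ω
    obtain ⟨n, hn, heq⟩ := Finset.exists_mem_eq_sup' ⟨0, hne N⟩ (fun n => S n ω)
    have heq' : MX N ω = S n ω := heq
    rw [heq']
    refine (hSb n ω).trans ?_
    have : (n : ℝ) ≤ (N : ℝ) + 1 := by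
      have := Finset.mem_range.mp hn; exact_mod_cast Nat.le_of_lt_succ this |>.trans (Nat.le_succ N)
    nlinarith
  have hkey : ∀ N ω, 0 < MX N ω → MX N ω ≤ h ω + MX N (T ω) := by
    intro N ω hpos
    obtain ⟨n, hn, heq⟩ := Finset.exists_mem_eq_sup' ⟨0, hne N⟩ (fun n => S n ω)
    match n, hn, heq with
    | 0, hn, heq =>
      have heq' : MX N ω = S 0 ω := heq
      rw [heq'] at hpos; simp [hS, birkhoffSum] at hpos
    | (m+1), hn, heq =>
      have heq' : MX N ω = S (m+1) ω := heq
      rw [heq']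
      have h1 : S (m+1) ω = h ω + S m (T ω) := birkhoffSum_succ' T h m ω
      have h2 : S m (T ω) ≤ MX N (T ω) := by
        refine Finset.le_sup' (fun n => S n (T ω)) ?_
        have := Finset.mem_range.mp hn; exact Finset.mem_range.mpr (by omega)
      linarith
  set E : ℕ → Set Ω := fun N => {ω | 0 < MX N ω} with hE
  have hEm : ∀ N, MeasurableSet (E N) := fun N => measurableSet_lt measurable_const (hMXm N)
  have hEmono : Monotone E := by
    intro N N' hNN ω hω
    simp only [hE, Set.mem_setOf_eq] at hω ⊢
    obtain ⟨n, hn, heq⟩ := Finset.exists_mem_eq_sup' ⟨0, hne N⟩ (fun n => S n ω)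
    have heq' : MX N ω = S n ω := heq
    rw [heq'] at hω
    refine lt_of_lt_of_le hω (Finset.le_sup' (fun n => S n ω) ?_)
    have := Finset.mem_range.mp hn; exact Finset.mem_range.mpr (by omega)
  have ih : Integrable h μ := integrable_of_bound μ hm C hb
  have iMX : ∀ N, Integrable (MX N) μ := fun N => integrable_of_bound μ (hMXm N) _ (hMXb N)
  have iMXT : ∀ N, Integrable (fun ω => MX N (T ω)) μ := fun N =>
    integrable_of_bound μ ((hMXm N).comp hT.measurable) _ (fun ω => hMXb N (T ω))
  have step : ∀ N, 0 ≤ ∫ ω in E N, h ω ∂μ := by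
    intro N
    have m1 : ∫ ω in E N, (MX N ω - MX N (T ω)) ∂μ ≤ ∫ ω in E N, h ω ∂μ := by
      refine setIntegral_mono_on ((iMX N).sub (iMXT N)).integrableOn ih.integrableOn (hEm N) ?_
      intro ω hω
      have := hkey N ω hω
      linarith
    have m2 : ∫ ω in E N, (MX N ω - MX N (T ω)) ∂μ
        = (∫ ω in E N, MX N ω ∂μ) - ∫ ω in E N, MX N (T ω) ∂μ :=
      integral_sub (iMX N).integrableOn (iMXT N).integrableOn
    have m3 : ∫ ω in E N, MX N ω ∂μ = ∫ ω, MX N ω ∂μ := by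
      refine setIntegral_eq_integral_of_forall_compl_eq_zero (fun ω hω => ?_)
      have : ¬ 0 < MX N ω := hω
      linarith [hMX0 N ω, not_lt.mp this]
    have m4 : ∫ ω in E N, MX N (T ω) ∂μ ≤ ∫ ω, MX N (T ω) ∂μ :=
      setIntegral_le_integral (iMXT N) (Filter.Eventually.of_forall (fun ω => hMX0 N (T ω)))
    have m5 : ∫ ω, MX N (T ω) ∂μ = ∫ ω, MX N ω ∂μ := by
      rw [← integral_map hT.measurable.aemeasurable (hMXm N).aestronglyMeasurable, hT.map_eq]
    linarith
  have hEU : {ω | ∃ n, 0 < birkhoffSum T h n ω} = ⋃ N, E N := by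
    ext ω
    simp only [Set.mem_setOf_eq, Set.mem_iUnion, hE]
    constructor
    · rintro ⟨n, hn⟩
      exact ⟨n, lt_of_lt_of_le hn (Finset.le_sup' (fun k => S k ω) (Finset.mem_range.mpr (Nat.lt_succ_self n)))⟩
    · rintro ⟨N, hN⟩
      obtain ⟨n, hn, heq⟩ := Finset.exists_mem_eq_sup' ⟨0, hne N⟩ (fun n => S n ω)
      have heq' : MX N ω = S n ω := heq
      refine ⟨n, ?_⟩
      have : (0:ℝ) < S n ω := heq' ▸ hN
      exact this
  have htend := tendsto_setIntegral_of_monotone hEm hEmono (ih.integrableOn)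
  rw [hEU]
  exact ge_of_tendsto htend (Filter.Eventually.of_forall step)

lemma ergodic_liminf_ge {Ω : Type*} [MeasurableSpace Ω] {μ : Measure Ω} [IsProbabilityMeasure μ]
    {T : Ω → Ω} (hT : Ergodic T μ) {f : Ω → ℝ} (hm : Measurable f) (C : ℝ)
    (hb : ∀ ω, |f ω| ≤ C) :
    ∀ᵐ ω ∂μ, ∫ x, f x ∂μ ≤ Filter.liminf (fun n => birkhoffSum T f n ω / n) atTop := by
  have hTm : Measurable T := hT.toMeasurePreserving.measurable
  set C' : ℝ := max C 0 with hC'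
  have hC0 : 0 ≤ C' := le_max_right _ _
  have hb' : ∀ ω, |f ω| ≤ C' := fun ω => (hb ω).trans (le_max_left _ _)
  set c : ℝ := ∫ x, f x ∂μ with hc
  have hSm : ∀ n, Measurable (fun ω => birkhoffSum T f n ω) := fun n =>
    Finset.measurable_sum _ (fun k _ => hm.comp (hTm.iterate k))
  have hSb : ∀ n ω, |birkhoffSum T f n ω| ≤ n * C' := by
    intro n ω
    calc |birkhoffSum T f n ω| ≤ ∑ k ∈ Finset.range n, |f (T^[k] ω)| := Finset.abs_sum_le_sum_abs _ _
    _ ≤ ∑ _k ∈ Finset.range n, C' := Finset.sum_le_sum (fun k _ => hb' _)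
    _ = n * C' := by simp [mul_comm]
  set A : ℕ → Ω → ℝ := fun n ω => birkhoffSum T f n ω / n with hA
  have hAm : ∀ n, Measurable (A n) := fun n => (hSm n).div_const _
  have hAb : ∀ ω n, |A n ω| ≤ C' := by
    intro ω n
    rcases Nat.eq_zero_or_pos n with hn | hn
    · simp [hA, hn, birkhoffSum, hC0]
    · have : |A n ω| = |birkhoffSum T f n ω| / n := by
        rw [hA]; rw [abs_div, Nat.abs_cast]
      rw [this, div_le_iff₀ (by exact_mod_cast hn)]
      calc |birkhoffSum T f n ω| ≤ n * C' := hSb n ω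
      _ = C' * n := mul_comm _ _
  set L : Ω → ℝ := fun ω => Filter.liminf (fun n => A n ω) atTop with hL
  have hLm : Measurable L := Measurable.liminf (fun n => hAm n)
  have hLT : ∀ ω, L (T ω) = L ω := by
    intro ω
    refine liminf_eq_of_sub C' (fun n => hAb (T ω) n) (fun n => hAb ω n) ?_
    have key : ∀ n : ℕ, A n (T ω) - A n ω = (f (T^[n] ω) - f ω) / n := by
      intro n
      have e1 := birkhoffSum_succ T f n ω
      have e2 := birkhoffSum_succ' T f n ω
      have h1 : birkhoffSum T f n (T ω) - birkhoffSum T f n ω = f (T^[n] ω) - f ω := by linarith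
      show birkhoffSum T f n (T ω) / (n:ℝ) - birkhoffSum T f n ω / (n:ℝ)
        = (f (T^[n] ω) - f ω) / (n:ℝ)
      rw [div_sub_div_same, h1]
    refine squeeze_zero_norm (fun n => ?_) (tendsto_const_div_atTop_nhds_zero_nat (2 * C'))
    rw [key n, Real.norm_eq_abs, abs_div, Nat.abs_cast]
    rcases Nat.eq_zero_or_pos n with hn | hn
    · simp [hn]
    · refine div_le_div_of_nonneg_right ?_ (by positivity)
      calc |f (T^[n] ω) - f ω| ≤ |f (T^[n] ω)| + |f ω| := abs_sub _ _
      _ ≤ C' + C' := add_le_add (hb' _) (hb' _)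
      _ = 2 * C' := by ring
  have intf : Integrable f μ := integrable_of_bound μ hm C' hb'
  have hmain : ∀ k : ℕ, μ {ω | L ω ≤ c - 1/(k+1)} = 0 := by
    intro k
    set ε : ℝ := 1/(k+1) with hεdef
    have hεpos : 0 < ε := by positivity
    set D := {ω | L ω ≤ c - ε} with hD
    have hDm : MeasurableSet D := measurableSet_le hLm measurable_const
    have hDinv : T ⁻¹' D = D := by
      ext ω; simp only [hD, Set.mem_preimage, Set.mem_setOf_eq, hLT ω]
    rcases hT.toPreErgodic.ae_empty_or_univ hDm hDinv with hcase | hcase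
    · exact ae_eq_empty.mp hcase
    · exfalso
      have hDfull : μ Dᶜ = 0 := by rwa [← ae_eq_univ]
      set g : Ω → ℝ := fun ω => (c - ε/2) - f ω with hg
      have hgm : Measurable g := measurable_const.sub hm
      have hgb : ∀ ω, |g ω| ≤ |c - ε/2| + C' := fun ω =>
        (abs_sub _ _).trans ((add_le_add_iff_left _).mpr (hb' ω))
      have hgsum : ∀ (n : ℕ) (ω : Ω),
          birkhoffSum T g n ω = n * (c - ε/2) - birkhoffSum T f n ω := by
        intro n ω
        simp [hg, birkhoffSum, Finset.sum_sub_distrib, Finset.card_range, mul_comm]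
        ring
      have hsub : D ⊆ {ω | ∃ n, 0 < birkhoffSum T g n ω} := by
        intro ω hω
        by_contra hno
        simp only [Set.mem_setOf_eq, not_exists, not_lt] at hno
        have hA1 : ∀ n : ℕ, 1 ≤ n → c - ε/2 ≤ A n ω := by
          intro n hn
          have := hno n
          rw [hgsum n ω] at this
          have hn' : (0:ℝ) < n := by exact_mod_cast hn
          rw [hA, le_div_iff₀ hn']
          nlinarith
        have h1 : c - ε/2 ≤ L ω :=
          le_liminf_of_le (cobdd_of_abs C' (hAb ω)) (Filter.eventually_atTop.mpr ⟨1, hA1⟩)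
        have h2 : L ω ≤ c - ε := hω
        linarith
      have h0 : 0 ≤ ∫ ω in {ω | ∃ n, 0 < birkhoffSum T g n ω}, g ω ∂μ :=
        maximal_ergodic μ hT.toMeasurePreserving hgm _ hgb
      set Eg := {ω | ∃ n, 0 < birkhoffSum T g n ω} with hEg
      have hEgm : MeasurableSet Eg := by
        have : Eg = ⋃ n, {ω | 0 < birkhoffSum T g n ω} := by
          ext ω; simp [hEg]
        rw [this]
        exact MeasurableSet.iUnion (fun n => measurableSet_lt measurable_const
          (Finset.measurable_sum _ (fun k _ => hgm.comp (hTm.iterate k))))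
      have hEgc : μ Egᶜ = 0 := measure_mono_null (Set.compl_subset_compl.mpr hsub) hDfull
      have intg : Integrable g μ := integrable_of_bound μ hgm _ hgb
      have heq1 : ∫ ω in Eg, g ω ∂μ = ∫ ω, g ω ∂μ := by
        have hsplit := integral_add_compl hEgm intg
        have hz : ∫ ω in Egᶜ, g ω ∂μ = 0 := by
          rw [Measure.restrict_eq_zero.mpr hEgc, integral_zero_measure]
        linarith
      have heq2 : ∫ ω, g ω ∂μ = -(ε/2) := by
        rw [hg]
        rw [integral_sub (integrable_const _) intf, integral_const]
        simp only [probReal_univ, measure_univ, ENNReal.toReal_one, smul_eq_mul, one_mul, ← hc]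
        ring
      rw [heq1, heq2] at h0
      linarith
  have hae : ∀ᵐ ω ∂μ, ∀ k : ℕ, ¬ (L ω ≤ c - 1/(k+1)) := by
    rw [ae_all_iff]
    intro k
    have := hmain k
    rw [ae_iff]
    simpa using this
  filter_upwards [hae] with ω hω
  by_contra hlt
  push_neg at hlt
  obtain ⟨k, hk⟩ := exists_nat_one_div_lt (show 0 < c - L ω by linarith)
  exact hω k (by push_cast; push_cast at hk; linarith)

lemma matNorm_nonneg {m n : Type*} [Fintype m] [Fintype n] (M : Matrix m n ℝ) :
    0 ≤ matNorm M :=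
  Finset.sum_nonneg fun _ _ => Finset.sum_nonneg fun _ _ => abs_nonneg _

lemma matNorm_mul_le {n : Type*} [Fintype n] [DecidableEq n] (A B : Matrix n n ℝ) :
    matNorm (A * B) ≤ matNorm A * matNorm B := by
  have h1 : matNorm (A * B) ≤ ∑ i, ∑ k, |A i k| * (∑ j, |B k j|) := by
    calc matNorm (A * B) = ∑ i, ∑ j, |∑ k, A i k * B k j| := by
          simp [matNorm, Matrix.mul_apply]
    _ ≤ ∑ i, ∑ j, ∑ k, |A i k * B k j| :=
        Finset.sum_le_sum fun i _ => Finset.sum_le_sum fun j _ => Finset.abs_sum_le_sum_abs _ _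
    _ = ∑ i, ∑ k, ∑ j, |A i k| * |B k j| := by
        refine Finset.sum_congr rfl fun i _ => ?_
        rw [Finset.sum_comm]
        exact Finset.sum_congr rfl fun k _ => Finset.sum_congr rfl fun j _ => abs_mul _ _
    _ = ∑ i, ∑ k, |A i k| * (∑ j, |B k j|) := by
        refine Finset.sum_congr rfl fun i _ => Finset.sum_congr rfl fun k _ => ?_
        rw [Finset.mul_sum]
  refine h1.trans ?_
  have h2 : ∀ k : n, (∑ j, |B k j|) ≤ matNorm B := fun k =>
    Finset.single_le_sum (f := fun k' => ∑ j, |B k' j|)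
      (fun _ _ => Finset.sum_nonneg fun _ _ => abs_nonneg _) (Finset.mem_univ k)
  calc ∑ i, ∑ k, |A i k| * (∑ j, |B k j|) ≤ ∑ i, ∑ k, |A i k| * matNorm B :=
      Finset.sum_le_sum fun i _ => Finset.sum_le_sum fun k _ =>
        mul_le_mul_of_nonneg_left (h2 k) (abs_nonneg _)
  _ = (∑ i, ∑ k, |A i k|) * matNorm B := by
      rw [Finset.sum_mul]
      exact Finset.sum_congr rfl fun i _ => by rw [Finset.sum_mul]
  _ = matNorm A * matNorm B := rfl

lemma step_ineq (a b w z t β : ℝ) (ha : 0 ≤ a) (hb : 0 ≤ b) (hw : 0 ≤ w) (hz : 0 ≤ z)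
    (ht : 0 ≤ t) (htw : t * w = β) (htb : t * a ≤ b) (hβz : β ≤ z)
    (u0 u1 : ℝ) (hu0 : 0 ≤ u0) (hu1 : 0 ≤ u1) :
    0 ≤ a*u0 + b*u1 ∧ 0 ≤ w*u0 + z*u1 ∧
      (a + β) * (u0 + t*u1) ≤ (a*u0 + b*u1) + t*(w*u0 + z*u1) := by
  refine ⟨by positivity, by positivity, ?_⟩
  nlinarith [mul_le_mul_of_nonneg_right htb hu1,
    mul_le_mul_of_nonneg_right (mul_le_mul_of_nonneg_left hβz ht) hu1]

lemma fin2_cases (j : Fin 2) : j = 0 ∨ j = 1 := by omega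

lemma matNorm_two (Q : Matrix (Fin 2) (Fin 2) ℝ) :
    matNorm Q = |Q 0 0| + |Q 0 1| + (|Q 1 0| + |Q 1 1|) := by
  simp [matNorm, Fin.sum_univ_two]

lemma matrix_prod_bound (M : Fin 2 → Matrix (Fin 2) (Fin 2) ℝ) (q : Fin 2 → ℝ) (t : ℝ)
    (hqpos : ∀ j, 0 < q j)
    (hstep : ∀ (j : Fin 2) (u0 u1 : ℝ), 0 ≤ u0 → 0 ≤ u1 →
      0 ≤ M j 0 0 * u0 + M j 0 1 * u1 ∧ 0 ≤ M j 1 0 * u0 + M j 1 1 * u1 ∧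
      q j * (u0 + t * u1) ≤ (M j 0 0 * u0 + M j 0 1 * u1) + t * (M j 1 0 * u0 + M j 1 1 * u1))
    (σ : ℕ → Fin 2) (n : ℕ) (u0 u1 : ℝ) (hu0 : 0 ≤ u0) (hu1 : 0 ≤ u1) :
    0 ≤ ((List.range n).map (fun k => M (σ k))).prod 0 0 * u0
        + ((List.range n).map (fun k => M (σ k))).prod 0 1 * u1 ∧
    0 ≤ ((List.range n).map (fun k => M (σ k))).prod 1 0 * u0
        + ((List.range n).map (fun k => M (σ k))).prod 1 1 * u1 ∧
      (∏ k ∈ Finset.range n, q (σ k)) * (u0 + t * u1) ≤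
        (((List.range n).map (fun k => M (σ k))).prod 0 0 * u0
          + ((List.range n).map (fun k => M (σ k))).prod 0 1 * u1)
        + t * (((List.range n).map (fun k => M (σ k))).prod 1 0 * u0
          + ((List.range n).map (fun k => M (σ k))).prod 1 1 * u1) := by
  induction n generalizing u0 u1 with
  | zero =>
    simp only [List.range_zero, List.map_nil, List.prod_nil, Finset.range_zero,
      Finset.prod_empty, one_mul]
    have h00 : (1 : Matrix (Fin 2) (Fin 2) ℝ) 0 0 = 1 := by simp [Matrix.one_apply]
    have h01 : (1 : Matrix (Fin 2) (Fin 2) ℝ) 0 1 = 0 := by simp [Matrix.one_apply]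
    have h10 : (1 : Matrix (Fin 2) (Fin 2) ℝ) 1 0 = 0 := by simp [Matrix.one_apply]
    have h11 : (1 : Matrix (Fin 2) (Fin 2) ℝ) 1 1 = 1 := by simp [Matrix.one_apply]
    rw [h00, h01, h10, h11]
    refine ⟨by linarith, by linarith, by nlinarith⟩
  | succ n IH =>
    have hprodsucc : ((List.range (n+1)).map (fun k => M (σ k))).prod
        = ((List.range n).map (fun k => M (σ k))).prod * M (σ n) := by
      rw [List.range_succ, List.map_append, List.prod_append]
      simp
    set P : Matrix (Fin 2) (Fin 2) ℝ := ((List.range n).map (fun k => M (σ k))).prod with hP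
    set A : Matrix (Fin 2) (Fin 2) ℝ := M (σ n) with hA
    obtain ⟨hv0, hv1, hqstep⟩ := hstep (σ n) u0 u1 hu0 hu1
    obtain ⟨ih0, ih1, ihq⟩ := IH (A 0 0 * u0 + A 0 1 * u1) (A 1 0 * u0 + A 1 1 * u1) hv0 hv1
    have hentry : ∀ i j' : Fin 2, ((List.range (n+1)).map (fun k => M (σ k))).prod i j'
        = P i 0 * A 0 j' + P i 1 * A 1 j' := by
      intro i j'
      rw [hprodsucc, Matrix.mul_apply, Fin.sum_univ_two]
    have hrw : ∀ i : Fin 2,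
        ((List.range (n+1)).map (fun k => M (σ k))).prod i 0 * u0
          + ((List.range (n+1)).map (fun k => M (σ k))).prod i 1 * u1
        = P i 0 * (A 0 0 * u0 + A 0 1 * u1) + P i 1 * (A 1 0 * u0 + A 1 1 * u1) := by
      intro i
      rw [hentry i 0, hentry i 1]; ring
    refine ⟨by rw [hrw 0]; exact ih0, by rw [hrw 1]; exact ih1, ?_⟩
    rw [hrw 0, hrw 1, Finset.prod_range_succ]
    have hQn0 : (0:ℝ) ≤ ∏ k ∈ Finset.range n, q (σ k) :=
      (Finset.prod_pos (fun k _ => hqpos _)).le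
    calc (∏ k ∈ Finset.range n, q (σ k)) * q (σ n) * (u0 + t * u1)
        = (∏ k ∈ Finset.range n, q (σ k)) * (q (σ n) * (u0 + t * u1)) := by ring
    _ ≤ (∏ k ∈ Finset.range n, q (σ k)) *
          ((A 0 0 * u0 + A 0 1 * u1) + t * (A 1 0 * u0 + A 1 1 * u1)) :=
        mul_le_mul_of_nonneg_left hqstep hQn0
    _ ≤ _ := by
        have := ihq
        linarith [ihq]

lemma matrix_prod_norm_lower (M : Fin 2 → Matrix (Fin 2) (Fin 2) ℝ) (q : Fin 2 → ℝ) (t : ℝ)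
    (ht : 0 ≤ t) (hqpos : ∀ j, 0 < q j)
    (hstep : ∀ (j : Fin 2) (u0 u1 : ℝ), 0 ≤ u0 → 0 ≤ u1 →
      0 ≤ M j 0 0 * u0 + M j 0 1 * u1 ∧ 0 ≤ M j 1 0 * u0 + M j 1 1 * u1 ∧
      q j * (u0 + t * u1) ≤ (M j 0 0 * u0 + M j 0 1 * u1) + t * (M j 1 0 * u0 + M j 1 1 * u1))
    (σ : ℕ → Fin 2) (n : ℕ) :
    (∏ k ∈ Finset.range n, q (σ k)) ≤
      max 1 t * matNorm (((List.range n).map (fun k => M (σ k))).prod) := by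
  obtain ⟨h0, h1, hq'⟩ :=
    matrix_prod_bound M q t hqpos hstep σ n 1 0 zero_le_one le_rfl
  set P : Matrix (Fin 2) (Fin 2) ℝ := ((List.range n).map (fun k => M (σ k))).prod with hP
  simp only [mul_one, mul_zero, add_zero] at h0 h1 hq'
  have hm1 : (1:ℝ) ≤ max 1 t := le_max_left _ _
  have hmt : t ≤ max 1 t := le_max_right _ _
  have hnorm := matNorm_two P
  have a1 : P 0 0 ≤ max 1 t * |P 0 0| := by
    calc P 0 0 ≤ |P 0 0| := le_abs_self _
    _ = 1 * |P 0 0| := (one_mul _).symm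
    _ ≤ max 1 t * |P 0 0| := mul_le_mul_of_nonneg_right hm1 (abs_nonneg _)
  have a2 : t * P 1 0 ≤ max 1 t * |P 1 0| :=
    mul_le_mul hmt (le_abs_self _) h1 (le_trans zero_le_one hm1)
  have a3 : (0:ℝ) ≤ max 1 t * |P 0 1| := by positivity
  have a4 : (0:ℝ) ≤ max 1 t * |P 1 1| := by positivity
  rw [hnorm]
  nlinarith [hq', a1, a2, a3, a4]

lemma matrix_prod_norm_upper (M : Fin 2 → Matrix (Fin 2) (Fin 2) ℝ) (σ : ℕ → Fin 2) (n : ℕ) :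
    matNorm (((List.range n).map (fun k => M (σ k))).prod)
      ≤ 2 * (max (matNorm (M 0)) (matNorm (M 1))) ^ n := by
  set BM := max (matNorm (M 0)) (matNorm (M 1)) with hBM
  have hBM0 : 0 ≤ BM := le_trans (matNorm_nonneg (M 0)) (le_max_left _ _)
  induction n with
  | zero =>
    simp only [List.range_zero, List.map_nil, List.prod_nil, pow_zero, mul_one]
    rw [matNorm_two]
    have h00 : (1 : Matrix (Fin 2) (Fin 2) ℝ) 0 0 = 1 := by simp [Matrix.one_apply]
    have h01 : (1 : Matrix (Fin 2) (Fin 2) ℝ) 0 1 = 0 := by simp [Matrix.one_apply]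
    have h10 : (1 : Matrix (Fin 2) (Fin 2) ℝ) 1 0 = 0 := by simp [Matrix.one_apply]
    have h11 : (1 : Matrix (Fin 2) (Fin 2) ℝ) 1 1 = 1 := by simp [Matrix.one_apply]
    rw [h00, h01, h10, h11]
    norm_num
  | succ n IH =>
    have hprodsucc : ((List.range (n+1)).map (fun k => M (σ k))).prod
        = ((List.range n).map (fun k => M (σ k))).prod * M (σ n) := by
      rw [List.range_succ, List.map_append, List.prod_append]
      simp
    rw [hprodsucc]
    have hle : matNorm (M (σ n)) ≤ BM := by
      rcases fin2_cases (σ n) with h | h <;> rw [h]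
      · exact le_max_left _ _
      · exact le_max_right _ _
    calc matNorm (((List.range n).map (fun k => M (σ k))).prod * M (σ n))
        ≤ matNorm (((List.range n).map (fun k => M (σ k))).prod) * matNorm (M (σ n)) :=
          matNorm_mul_le _ _
    _ ≤ (2 * BM ^ n) * BM :=
          mul_le_mul IH hle (matNorm_nonneg _) (by positivity)
    _ = 2 * BM ^ (n+1) := by ring

set_option maxHeartbeats 2000000 in
theorem stochastic_switcher_liminf_lower_bound
    {Ω : Type*} [MeasurableSpace Ω] (μ : Measure Ω) [IsProbabilityMeasure μ]
    (T : Ω → Ω) (hT : Ergodic T μ) (e : Ω → Fin 2) (he : Measurable e)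
    (s : Fin 2 → ℝ) (hs : ∀ i, s i ∈ Set.Ioc (0 : ℝ) 1) (hss : s 0 * s 1 < 1)
    (henv : ∀ i j : Fin 2, μ {ω | e ω = i ∧ e (T ω) = j}
      = ENNReal.ofReal (envPi s i * envP s i j))
    (ma md α w d : ℝ) (hma : 0 < ma) (hmd : 0 ≤ md) (hα : α ∈ Set.Ioo (0 : ℝ) 1)
    (hw : 0 ≤ w) (hd : 0 ≤ d) (hwd : w + d ≤ 1)
    (M : Fin 2 → Matrix (Fin 2) (Fin 2) ℝ)
    (hM : M = ![!![ma, md; w, 1 - w - d], !![α * ma, α * md; w, 1 - w - d]]) :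
    ∀ᵐ ω ∂μ,
      s 1 / (s 0 + s 1) * Real.log ((M 0).trace - max ((M 0).det / ma) 0)
        + s 0 / (s 0 + s 1) * Real.log ((M 1).trace - max ((M 0).det / ma) 0)
      ≤ Filter.liminf (fun n : ℕ =>
          Real.log (matNorm (((List.range n).map (fun k => M (e (T^[k+1] ω)))).prod)) / n)
        atTop := by
  obtain ⟨hα0, hα1⟩ := hα
  have hTm : Measurable T := hT.toMeasurePreserving.measurable
  have h2 : ∀ j : Fin 2, j = 0 ∨ j = 1 := by decide
  set z : ℝ := 1 - w - d with hzdef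
  have hz : 0 ≤ z := by rw [hzdef]; linarith
  set r : ℝ := md / ma with hrdef
  have hr : 0 ≤ r := div_nonneg hmd hma.le
  set β : ℝ := min (r * w) z with hβdef
  have hβ0 : 0 ≤ β := le_min (by positivity) hz
  have hβz : β ≤ z := min_le_right _ _
  set t : ℝ := if w = 0 then r else β / w with htdef
  have ht : 0 ≤ t := by
    rw [htdef]; split_ifs with h
    · exact hr
    · exact div_nonneg hβ0 hw
  have htw : t * w = β := by
    rw [htdef, hβdef]; split_ifs with h
    · simp [h, min_eq_left hz]
    · rw [← hβdef]; exact div_mul_cancel₀ β h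
  have htr : t ≤ r := by
    rw [htdef]; split_ifs with h
    · exact le_refl r
    · have hwpos : 0 < w := lt_of_le_of_ne hw (Ne.symm h)
      rw [div_le_iff₀ hwpos]
      exact min_le_left _ _
  have htb0 : t * ma ≤ md := by
    have h1 := mul_le_mul_of_nonneg_right htr hma.le
    rw [hrdef] at h1
    calc t * ma ≤ md / ma * ma := h1
    _ = md := div_mul_cancel₀ md (ne_of_gt hma)
  have htb1 : t * (α * ma) ≤ α * md := by nlinarith
  set q : Fin 2 → ℝ := ![ma + β, α * ma + β] with hqdef
  have hq0 : q 0 = ma + β := rfl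
  have hq1 : q 1 = α * ma + β := rfl
  have hqpos : ∀ j, 0 < q j := by
    intro j
    rcases h2 j with h | h <;> rw [h]
    · rw [hq0]; nlinarith
    · rw [hq1]; nlinarith
  set g : Fin 2 → ℝ := fun j => Real.log (q j) with hgdef
  set f : Ω → ℝ := fun ω => g (e ω) with hfdef
  have hgm : Measurable g := measurable_of_countable g
  have hfm : Measurable f := hgm.comp he
  set Cf : ℝ := max |g 0| |g 1| with hCf
  have hfb : ∀ ω, |f ω| ≤ Cf := by
    intro ω
    have : f ω = g (e ω) := rfl
    rw [this]
    rcases h2 (e ω) with h | h <;> rw [h]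
    · exact le_max_left _ _
    · exact le_max_right _ _
  have hM0 : M 0 = !![ma, md; w, z] := by rw [hM]; rfl
  have hM1 : M 1 = !![α * ma, α * md; w, z] := by rw [hM]; rfl
  have htrace : ∀ j : Fin 2, (M j).trace - max ((M 0).det / ma) 0 = q j := by
    have hdm : (M 0).det / ma = z - r * w := by
      rw [hM0, Matrix.det_fin_two_of, hrdef]
      field_simp
    have hmm : z - max (z - r * w) 0 = β := by
      rw [hβdef]
      rcases le_total (r * w) z with h | h
      · rw [max_eq_left (by linarith), min_eq_left h]; ring
      · rw [max_eq_right (by linarith), min_eq_right h]; ring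
    have ht0 : (M 0).trace = ma + z := by
      rw [hM0]
      rw [show (!![ma, md; w, z]).trace = !![ma, md; w, z] 0 0 + !![ma, md; w, z] 1 1 from
        Matrix.trace_fin_two _]
      rfl
    have ht1 : (M 1).trace = α * ma + z := by
      rw [hM1]
      rw [show (!![α * ma, α * md; w, z]).trace
          = !![α * ma, α * md; w, z] 0 0 + !![α * ma, α * md; w, z] 1 1 from
        Matrix.trace_fin_two _]
      rfl
    intro j
    rcases h2 j with h | h <;> rw [h]
    · rw [hdm, hq0, ht0]
      linarith [hmm]
    · rw [hdm, hq1, ht1]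
      linarith [hmm]
  -- step hypothesis for the product lemmas
  have hstep : ∀ (j : Fin 2) (u0 u1 : ℝ), 0 ≤ u0 → 0 ≤ u1 →
      0 ≤ M j 0 0 * u0 + M j 0 1 * u1 ∧ 0 ≤ M j 1 0 * u0 + M j 1 1 * u1 ∧
      q j * (u0 + t * u1) ≤ (M j 0 0 * u0 + M j 0 1 * u1)
        + t * (M j 1 0 * u0 + M j 1 1 * u1) := by
    intro j u0 u1 hu0 hu1
    rcases h2 j with h | h <;> rw [h]
    · rw [hM0, hq0]
      have e00 : (!![ma, md; w, z] : Matrix (Fin 2) (Fin 2) ℝ) 0 0 = ma := rfl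
      have e01 : (!![ma, md; w, z] : Matrix (Fin 2) (Fin 2) ℝ) 0 1 = md := rfl
      have e10 : (!![ma, md; w, z] : Matrix (Fin 2) (Fin 2) ℝ) 1 0 = w := rfl
      have e11 : (!![ma, md; w, z] : Matrix (Fin 2) (Fin 2) ℝ) 1 1 = z := rfl
      rw [e00, e01, e10, e11]
      exact step_ineq ma md w z t β hma.le hmd hw hz ht htw htb0 hβz u0 u1 hu0 hu1
    · rw [hM1, hq1]
      have e00 : (!![α * ma, α * md; w, z] : Matrix (Fin 2) (Fin 2) ℝ) 0 0 = α * ma := rfl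
      have e01 : (!![α * ma, α * md; w, z] : Matrix (Fin 2) (Fin 2) ℝ) 0 1 = α * md := rfl
      have e10 : (!![α * ma, α * md; w, z] : Matrix (Fin 2) (Fin 2) ℝ) 1 0 = w := rfl
      have e11 : (!![α * ma, α * md; w, z] : Matrix (Fin 2) (Fin 2) ℝ) 1 1 = z := rfl
      rw [e00, e01, e10, e11]
      exact step_ineq (α * ma) (α * md) w z t β (by positivity) (by positivity) hw hz ht htw
        htb1 hβz u0 u1 hu0 hu1
  -- lower bound for matNorm of products along the orbit
  have hQpos : ∀ (x : Ω) (n : ℕ), 0 < ∏ k ∈ Finset.range n, q (e (T^[k+1] x)) :=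
    fun x n => Finset.prod_pos (fun k _ => hqpos _)
  have hmpos : (0:ℝ) < max 1 t := lt_of_lt_of_le one_pos (le_max_left _ _)
  have hlow : ∀ (x : Ω) (n : ℕ), (∏ k ∈ Finset.range n, q (e (T^[k+1] x))) ≤
      max 1 t * matNorm (((List.range n).map (fun k => M (e (T^[k+1] x)))).prod) :=
    fun x n => matrix_prod_norm_lower M q t ht hqpos hstep (fun k => e (T^[k+1] x)) n
  have hmatpos : ∀ (x : Ω) (n : ℕ),
      0 < matNorm (((List.range n).map (fun k => M (e (T^[k+1] x)))).prod) := by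
    intro x n
    by_contra hcon
    push_neg at hcon
    have := hlow x n
    nlinarith [hQpos x n]
  have hloglow : ∀ (x : Ω) (n : ℕ),
      birkhoffSum T f n (T x) - Real.log (max 1 t) ≤
        Real.log (matNorm (((List.range n).map (fun k => M (e (T^[k+1] x)))).prod)) := by
    intro x n
    have h1 : (∏ k ∈ Finset.range n, q (e (T^[k+1] x))) / max 1 t ≤
        matNorm (((List.range n).map (fun k => M (e (T^[k+1] x)))).prod) := by
      rw [div_le_iff₀ hmpos]
      calc (∏ k ∈ Finset.range n, q (e (T^[k+1] x))) ≤
          max 1 t * matNorm (((List.range n).map (fun k => M (e (T^[k+1] x)))).prod) := hlow x n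
      _ = matNorm (((List.range n).map (fun k => M (e (T^[k+1] x)))).prod) * max 1 t := mul_comm _ _
    have h2 := Real.log_le_log (div_pos (hQpos x n) hmpos) h1
    rw [Real.log_div (ne_of_gt (hQpos x n)) (ne_of_gt hmpos)] at h2
    have h3 : Real.log (∏ k ∈ Finset.range n, q (e (T^[k+1] x))) = birkhoffSum T f n (T x) := by
      rw [Real.log_prod (fun k _ => ne_of_gt (hqpos _))]
      simp only [birkhoffSum]
      refine Finset.sum_congr rfl fun k _ => ?_
      have : f (T^[k] (T x)) = Real.log (q (e (T^[k+1] x))) := by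
        rw [← Function.iterate_succ_apply]
      rw [this]
    linarith [h2, h3.ge, h3.le]
  -- upper bound
  set BM : ℝ := max (matNorm (M 0)) (matNorm (M 1)) with hBMdef
  have hBMpos : 0 < BM := by
    have : ma ≤ matNorm (M 0) := by
      rw [hM0, matNorm_two]
      have e00 : (!![ma, md; w, z] : Matrix (Fin 2) (Fin 2) ℝ) 0 0 = ma := rfl
      rw [e00]
      have := le_abs_self ma
      have h1 : (0:ℝ) ≤ |(!![ma, md; w, z] : Matrix (Fin 2) (Fin 2) ℝ) 0 1| := abs_nonneg _
      have h2 : (0:ℝ) ≤ |(!![ma, md; w, z] : Matrix (Fin 2) (Fin 2) ℝ) 1 0| := abs_nonneg _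
      have h3 : (0:ℝ) ≤ |(!![ma, md; w, z] : Matrix (Fin 2) (Fin 2) ℝ) 1 1| := abs_nonneg _
      linarith
    exact lt_of_lt_of_le hma (this.trans (le_max_left _ _))
  have hlogup : ∀ (x : Ω) (n : ℕ), 1 ≤ n →
      Real.log (matNorm (((List.range n).map (fun k => M (e (T^[k+1] x)))).prod)) / n ≤
        Real.log 2 + |Real.log BM| := by
    intro x n hn
    have npos : (0:ℝ) < n := by exact_mod_cast hn
    have hup := matrix_prod_norm_upper M (fun k => e (T^[k+1] x)) n
    rw [← hBMdef] at hup
    have h1 : Real.log (matNorm (((List.range n).map (fun k => M (e (T^[k+1] x)))).prod))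
        ≤ Real.log 2 + n * Real.log BM := by
      have := Real.log_le_log (hmatpos x n) hup
      rwa [Real.log_mul two_ne_zero (by positivity), Real.log_pow] at this
    rw [div_le_iff₀ npos]
    have l2 : (0:ℝ) ≤ Real.log 2 := Real.log_nonneg one_le_two
    have hn1 : (1:ℝ) ≤ n := by exact_mod_cast hn
    have labs : (n:ℝ) * Real.log BM ≤ n * |Real.log BM| :=
      mul_le_mul_of_nonneg_left (le_abs_self _) npos.le
    have hl2n : Real.log 2 ≤ n * Real.log 2 := by
      nlinarith [mul_nonneg (sub_nonneg.mpr hn1) l2]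
    have hrhs : (Real.log 2 + |Real.log BM|) * n = n * Real.log 2 + n * |Real.log BM| := by ring
    rw [hrhs]
    linarith
  -- measure of the environment states
  have hπ : ∀ j : Fin 2, 0 ≤ envPi s j := by
    intro j
    have h0 := (hs 0).1
    have h1 := (hs 1).1
    rcases h2 j with h | h <;> rw [h] <;> simp [envPi] <;> positivity
  have hpre : ∀ j : Fin 2, μ (e ⁻¹' {j}) = ENNReal.ofReal (envPi s j) := by
    intro j
    have hPrownn : ∀ j' : Fin 2, 0 ≤ envP s j j' := by
      intro j'
      have h0 := (hs 0).1
      have h1 := (hs 1).1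
      have h0' := (hs 0).2
      have h1' := (hs 1).2
      rcases h2 j with h | h <;> rcases h2 j' with h' | h' <;> rw [h, h'] <;>
        simp [envP] <;> linarith
    have hProw : envP s j 0 + envP s j 1 = 1 := by
      rcases h2 j with h | h <;> rw [h] <;> simp [envP] <;> ring
    have hsplit : e ⁻¹' {j} = {ω | e ω = j ∧ e (T ω) = 0} ∪ {ω | e ω = j ∧ e (T ω) = 1} := by
      ext ω
      simp only [Set.mem_preimage, Set.mem_singleton_iff, Set.mem_union, Set.mem_setOf_eq]
      constructor
      · intro hj
        rcases h2 (e (T ω)) with h | h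
        · exact Or.inl ⟨hj, h⟩
        · exact Or.inr ⟨hj, h⟩
      · rintro (⟨hj, -⟩ | ⟨hj, -⟩) <;> exact hj
    have hms : MeasurableSet {ω | e ω = j ∧ e (T ω) = 1} := by
      have : {ω | e ω = j ∧ e (T ω) = 1} = e ⁻¹' {j} ∩ (fun ω => e (T ω)) ⁻¹' {1} := by
        ext ω; simp [Set.mem_inter_iff]
      rw [this]
      exact (he (measurableSet_singleton j)).inter ((he.comp hTm) (measurableSet_singleton 1))
    have hdisj : Disjoint {ω | e ω = j ∧ e (T ω) = 0} {ω | e ω = j ∧ e (T ω) = 1} := by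
      rw [Set.disjoint_left]
      rintro ω ⟨-, h0⟩ ⟨-, h1⟩
      rw [h0] at h1
      exact absurd h1 (by decide)
    rw [hsplit, measure_union hdisj hms, henv j 0, henv j 1,
      ← ENNReal.ofReal_add (mul_nonneg (hπ j) (hPrownn 0)) (mul_nonneg (hπ j) (hPrownn 1))]
    congr 1
    rw [← mul_add, hProw, mul_one]
  -- integral of f
  have hintf : Integrable f μ := integrable_of_bound μ hfm Cf hfb
  have hint : ∫ x, f x ∂μ = envPi s 0 * g 0 + envPi s 1 * g 1 := by
    have hs0 : MeasurableSet (e ⁻¹' ({0} : Set (Fin 2))) := he (measurableSet_singleton 0)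
    have h01 : (e ⁻¹' ({0} : Set (Fin 2)))ᶜ = e ⁻¹' {1} := by
      ext ω
      simp only [Set.mem_compl_iff, Set.mem_preimage, Set.mem_singleton_iff]
      rcases h2 (e ω) with h | h <;> rw [h] <;> simp
    have hc : ∀ j : Fin 2, ∫ x in e ⁻¹' {j}, f x ∂μ = envPi s j * g j := by
      intro j
      have hmsj : MeasurableSet (e ⁻¹' ({j} : Set (Fin 2))) := he (measurableSet_singleton j)
      have : ∫ x in e ⁻¹' {j}, f x ∂μ = ∫ _x in e ⁻¹' {j}, g j ∂μ := by
        refine setIntegral_congr_fun hmsj (fun x hx => ?_)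
        have hx' : e x = j := hx
        show g (e x) = g j
        rw [hx']
      rw [this, setIntegral_const, measureReal_def, hpre j, ENNReal.toReal_ofReal (hπ j), smul_eq_mul]
    rw [← integral_add_compl hs0 hintf, h01, hc 0, hc 1]
  -- Birkhoff liminf bound, transported by one step of T
  have hbirk := ergodic_liminf_ge hT hfm Cf hfb
  rw [hint] at hbirk
  have hKlim' : ∀ᵐ ω ∂μ, envPi s 0 * g 0 + envPi s 1 * g 1 ≤
      Filter.liminf (fun n => birkhoffSum T f n (T ω) / n) atTop := by
    rw [← hT.toMeasurePreserving.map_eq] at hbirk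
    exact ae_of_ae_map hTm.aemeasurable hbirk
  -- bound for |birkhoffSum/n|
  have hSb : ∀ (x : Ω) (n : ℕ), |birkhoffSum T f n x / n| ≤ max Cf 0 := by
    intro x n
    rcases Nat.eq_zero_or_pos n with hn | hn
    · simp [hn, birkhoffSum, le_max_right]
    · have habs : |birkhoffSum T f n x| ≤ n * max Cf 0 := by
        calc |birkhoffSum T f n x| ≤ ∑ k ∈ Finset.range n, |f (T^[k] x)| :=
            Finset.abs_sum_le_sum_abs _ _
        _ ≤ ∑ _k ∈ Finset.range n, max Cf 0 :=
            Finset.sum_le_sum (fun k _ => (hfb _).trans (le_max_left _ _))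
        _ = n * max Cf 0 := by simp [mul_comm]
      rw [abs_div, Nat.abs_cast, div_le_iff₀ (by exact_mod_cast hn)]
      calc |birkhoffSum T f n x| ≤ n * max Cf 0 := habs
      _ = max Cf 0 * n := mul_comm _ _
  -- final assembly
  filter_upwards [hKlim'] with ω hKω
  have hLHS : s 1 / (s 0 + s 1) * Real.log ((M 0).trace - max ((M 0).det / ma) 0)
      + s 0 / (s 0 + s 1) * Real.log ((M 1).trace - max ((M 0).det / ma) 0)
      = envPi s 0 * g 0 + envPi s 1 * g 1 := by
    have e0 : envPi s 0 = s 1 / (s 0 + s 1) := rfl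
    have e1 : envPi s 1 = s 0 / (s 0 + s 1) := rfl
    have g0 : g 0 = Real.log (q 0) := rfl
    have g1 : g 1 = Real.log (q 1) := rfl
    rw [e0, e1, g0, g1, ← htrace 0, ← htrace 1]
  rw [hLHS]
  set u : ℕ → ℝ := fun n =>
    Real.log (matNorm (((List.range n).map (fun k => M (e (T^[k+1] ω)))).prod)) / n with hudef
  show envPi s 0 * g 0 + envPi s 1 * g 1 ≤ Filter.liminf u atTop
  have cobdd : Filter.IsCoboundedUnder (· ≥ ·) atTop u :=
    Filter.isCoboundedUnder_ge_of_eventually_le atTop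
      (Filter.eventually_atTop.mpr ⟨1, fun n hn => hlogup ω n hn⟩)
  refine le_of_forall_pos_le_add (fun ε hε => ?_)
  have hKε : envPi s 0 * g 0 + envPi s 1 * g 1 - ε ≤ Filter.liminf u atTop := by
    refine le_liminf_of_le cobdd ?_
    have hev1 : ∀ᶠ n in atTop,
        envPi s 0 * g 0 + envPi s 1 * g 1 - ε/2 < birkhoffSum T f n (T ω) / n :=
      eventually_lt_of_lt_liminf (lt_of_lt_of_le (by linarith) hKω)
        (bddBelow_of_abs (max Cf 0) (fun n => hSb (T ω) n))
    have hev2 : ∀ᶠ n : ℕ in atTop, Real.log (max 1 t) / (n:ℝ) < ε/2 :=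
      (tendsto_const_div_atTop_nhds_zero_nat (Real.log (max 1 t))).eventually
        (gt_mem_nhds (by linarith))
    have hev3 : ∀ᶠ n : ℕ in atTop, 1 ≤ n := Filter.eventually_ge_atTop 1
    filter_upwards [hev1, hev2, hev3] with n h1 h2 h3
    have npos : (0:ℝ) < n := by exact_mod_cast h3
    have hl := hloglow ω n
    have hdiv : (birkhoffSum T f n (T ω) - Real.log (max 1 t)) / n ≤ u n :=
      div_le_div_of_nonneg_right hl npos.le
    rw [sub_div] at hdiv
    linarith
  linarith
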